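/- Let δ > 0 and assume that κ⁺ Eₙ^{a⁺}(x) ≤ δ C (m n + κ⁻ Eₙ^{a⁻}(x)) for every n ≥ 1 and every x ∈ (ℝ^d)ⁿ. Then for every sequence G = (G⁽ⁿ⁾)_{n≥0} with each G⁽ⁿ⁾ symmetric under permutations of its arguments and ‖L₀G‖_C < ∞, one has ‖L₃G‖_C ≤ δ ‖L₀G‖_C. (Lemma 4.5: relative bound of the birth part L₃ with respect to the diagonal part L₀.) -/

import Mathlib

open MeasureTheory ENNReal

/-- The pair interaction energy `Eₙ^a(x) = Σ_{i≠j} a(xᵢ - xⱼ)` (equal to `0` for `n ≤ 1`). -/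
def pairEnergy (d : ℕ) (a : (Fin d → ℝ) → ℝ) (n : ℕ) (x : Fin n → (Fin d → ℝ)) : ℝ :=
  ∑ i : Fin n, ∑ j : Fin n, if i ≠ j then a (x i - x j) else 0

/-- The norm of the Banach space `𝓛_C = L¹(Γ₀, C^{|η|}dλ(η))`. -/
noncomputable def normLC (d : ℕ) (C : ℝ) (G : (n : ℕ) → (Fin n → (Fin d → ℝ)) → ℝ) : ℝ≥0∞ :=
  ∑' n : ℕ, ENNReal.ofReal (C ^ n / n.factorial) *
    ∫⁻ x : Fin n → (Fin d → ℝ), ENNReal.ofReal |G n x|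

/-- The diagonal operator `(L₀G)⁽ⁿ⁾(x) = -(mn + κ⁻Eₙ^{a⁻}(x))G⁽ⁿ⁾(x)`. -/
def L0 (d : ℕ) (m κm : ℝ) (aminus : (Fin d → ℝ) → ℝ)
    (G : (n : ℕ) → (Fin n → (Fin d → ℝ)) → ℝ) :
    (n : ℕ) → (Fin n → (Fin d → ℝ)) → ℝ :=
  fun n x => -(m * n + κm * pairEnergy d aminus n x) * G n x

/-- The birth part `(L₃G)⁽ⁿ⁾(x₁,…,xₙ) = κ⁺ Σ_j ∫_{ℝ^d} a⁺(y-xⱼ) G⁽ⁿ⁺¹⁾(x₁,…,xₙ,y) dy`. -/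
noncomputable def L3 (d : ℕ) (κp : ℝ) (aplus : (Fin d → ℝ) → ℝ)
    (G : (n : ℕ) → (Fin n → (Fin d → ℝ)) → ℝ) :
    (n : ℕ) → (Fin n → (Fin d → ℝ)) → ℝ :=
  fun n x =>
    κp * ∑ j : Fin n, ∫ y : Fin d → ℝ, aplus (y - x j) * G (n + 1) (Fin.snoc x y)

/-- `G = (G⁽ⁿ⁾)` has components symmetric under permutations of the arguments. -/
def IsSymmSeq (d : ℕ) (G : (n : ℕ) → (Fin n → (Fin d → ℝ)) → ℝ) : Prop :=
  ∀ (n : ℕ) (σ : Equiv.Perm (Fin n)) (x : Fin n → (Fin d → ℝ)), G n (x ∘ σ) = G n x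

section Aux
variable {d : ℕ}

lemma lintegral_comp_perm {N : ℕ} (σ : Equiv.Perm (Fin N))
    (F : (Fin N → Fin d → ℝ) → ℝ≥0∞) :
    ∫⁻ z : Fin N → Fin d → ℝ, F (z ∘ σ) = ∫⁻ z, F z := by
  set e := MeasurableEquiv.piCongrLeft (fun _ : Fin N => Fin d → ℝ) σ with he
  have h := (volume_measurePreserving_piCongrLeft (fun _ : Fin N => Fin d → ℝ) σ).symm e
  rw [MeasurePreserving.lintegral_map_equiv F e.symm h]
  refine lintegral_congr fun z => ?_
  have : (e.symm z : Fin N → Fin d → ℝ) = z ∘ σ :=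
    funext fun i => by simp [he, MeasurableEquiv.piCongrLeft]
  rw [this]

lemma measurable_snoc' {n : ℕ} :
    Measurable (fun p : (Fin n → Fin d → ℝ) × (Fin d → ℝ) =>
      (Fin.snoc p.1 p.2 : Fin (n + 1) → Fin d → ℝ)) := by
  apply measurable_pi_lambda
  intro i
  induction i using Fin.lastCases with
  | last => simpa [Fin.snoc_last] using (measurable_snd : Measurable fun p : (Fin n → Fin d → ℝ) × (Fin d → ℝ) => p.2)
  | cast i =>
    simp only [Fin.snoc_castSucc]
    exact (measurable_pi_apply i).comp measurable_fst

lemma lintegral_snoc {n : ℕ} (H : (Fin (n + 1) → Fin d → ℝ) → ℝ≥0∞) (hH : Measurable H) :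
    ∫⁻ x : Fin n → Fin d → ℝ, ∫⁻ y : Fin d → ℝ, H (Fin.snoc x y) = ∫⁻ z, H z := by
  set e := MeasurableEquiv.piFinSuccAbove (fun _ : Fin (n + 1) => Fin d → ℝ) (Fin.last n) with he
  have h := (volume_preserving_piFinSuccAbove (fun _ : Fin (n + 1) => Fin d → ℝ) (Fin.last n)).symm e
  have hsymm : ∀ (y : Fin d → ℝ) (x : Fin n → Fin d → ℝ),
      e.symm (y, x) = Fin.snoc x y := by
    intro y x
    simp [he, MeasurableEquiv.piFinSuccAbove, Fin.insertNth_last', Fin.snocEquiv]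
  rw [MeasurePreserving.lintegral_map_equiv H e.symm h, Measure.volume_eq_prod,
      lintegral_prod (fun a => H (e.symm a)) (hH.comp e.symm.measurable).aemeasurable]
  simp_rw [hsymm]
  exact lintegral_lintegral_swap (f := fun x y => H (Fin.snoc x y))
      ((hH.comp measurable_snoc').aemeasurable)

lemma exists_perm_two {N : ℕ} (i j i' j' : Fin N) (hij : i ≠ j) (hij' : i' ≠ j') :
    ∃ σ : Equiv.Perm (Fin N), σ i = i' ∧ σ j = j' := by
  classical
  set τ := Equiv.swap i i' with hτ
  refine ⟨τ.trans (Equiv.swap (τ j) j'), ?_, ?_⟩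
  · have h1 : i' ≠ τ j := by
      intro h
      exact hij (τ.injective (by rw [← h, hτ, Equiv.swap_apply_left]))
    have hτi : τ i = i' := Equiv.swap_apply_left i i'
    simp only [Equiv.trans_apply, hτi]
    exact Equiv.swap_apply_of_ne_of_ne h1 hij'
  · simp only [Equiv.trans_apply, Equiv.swap_apply_left]

lemma pairEnergy_nonneg {a : (Fin d → ℝ) → ℝ} (ha : ∀ x, 0 ≤ a x) (n : ℕ)
    (x : Fin n → Fin d → ℝ) : 0 ≤ pairEnergy d a n x := by
  refine Finset.sum_nonneg fun i _ => Finset.sum_nonneg fun j _ => ?_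
  split
  · exact ha _
  · exact le_rfl

end Aux
lemma key_step {d : ℕ}
    (aminus aplus : (Fin d → ℝ) → ℝ)
    (hap_nonneg : ∀ x, 0 ≤ aplus x) (hap_meas : Measurable aplus)
    (m κm κp C δ : ℝ) (hκp : 0 ≤ κp) (hδ : 0 ≤ δ) (hC : 0 ≤ C)
    (hδC : 0 ≤ δ * C)
    (hdom : ∀ (n : ℕ), 1 ≤ n → ∀ x : Fin n → (Fin d → ℝ),
      κp * pairEnergy d aplus n x ≤ δ * C * (m * n + κm * pairEnergy d aminus n x))
    (hmE : ∀ (k : ℕ) (x : Fin k → Fin d → ℝ), 0 ≤ m * k + κm * pairEnergy d aminus k x)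
    (G : (n : ℕ) → (Fin n → (Fin d → ℝ)) → ℝ) (hGmeas : ∀ n, Measurable (G n))
    (hGsymm : IsSymmSeq d G) (n : ℕ) :
    ENNReal.ofReal (C ^ n / n.factorial) *
        ∫⁻ x : Fin n → Fin d → ℝ, ENNReal.ofReal |L3 d κp aplus G n x|
      ≤ ENNReal.ofReal δ *
        (ENNReal.ofReal (C ^ (n + 1) / (n + 1).factorial) *
          ∫⁻ z : Fin (n + 1) → Fin d → ℝ, ENNReal.ofReal |L0 d m κm aminus G (n + 1) z|) := by
  classical
  rcases Nat.eq_zero_or_pos n with rfl | hn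
  · simp [L3]
  -- the common pair integral
  set I : Fin (n + 1) → Fin (n + 1) → ℝ≥0∞ := fun i j =>
    ∫⁻ z : Fin (n + 1) → Fin d → ℝ,
      ENNReal.ofReal (aplus (z i - z j)) * ENNReal.ofReal |G (n + 1) z| with hI
  have hInt_meas : ∀ i j : Fin (n + 1), Measurable fun z : Fin (n + 1) → Fin d → ℝ =>
      ENNReal.ofReal (aplus (z i - z j)) * ENNReal.ofReal |G (n + 1) z| := fun i j =>
    ((hap_meas.comp ((measurable_pi_apply i).sub (measurable_pi_apply j))).ennreal_ofReal).mul
      ((hGmeas (n + 1)).abs.ennreal_ofReal)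
  have hIeq : ∀ i j i' j' : Fin (n + 1), i ≠ j → i' ≠ j' → I i j = I i' j' := by
    intro i j i' j' hij hij'
    obtain ⟨σ, hσ1, hσ2⟩ := exists_perm_two i j i' j' hij hij'
    calc I i j
        = ∫⁻ z, (fun w => ENNReal.ofReal (aplus (w i - w j)) *
            ENNReal.ofReal |G (n + 1) w|) (z ∘ σ) :=
          (lintegral_comp_perm σ _).symm
      _ = I i' j' := by
          refine lintegral_congr fun z => ?_
          simp only [Function.comp_apply]
          rw [hσ1, hσ2, hGsymm (n + 1) σ z]
  set j₀ : Fin n := ⟨0, hn⟩ with hj₀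
  set I₀ : ℝ≥0∞ := I (Fin.last n) (Fin.castSucc j₀) with hI₀
  have hlastne : ∀ j : Fin n, Fin.last n ≠ Fin.castSucc j := fun j => (Fin.castSucc_lt_last j).ne'
  have hIconst : ∀ j : Fin n, I (Fin.last n) (Fin.castSucc j) = I₀ := fun j =>
    hIeq _ _ _ _ (hlastne j) (hlastne j₀)
  -- Fubini for each j
  have hfub : ∀ j : Fin n,
      (∫⁻ x : Fin n → Fin d → ℝ, ∫⁻ y : Fin d → ℝ,
        ENNReal.ofReal (aplus (y - x j) * |G (n + 1) (Fin.snoc x y)|))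
        = I (Fin.last n) (Fin.castSucc j) := by
    intro j
    rw [show I (Fin.last n) (Fin.castSucc j) = ∫⁻ z : Fin (n + 1) → Fin d → ℝ,
      ENNReal.ofReal (aplus (z (Fin.last n) - z (Fin.castSucc j))) *
        ENNReal.ofReal |G (n + 1) z| from rfl]
    rw [← lintegral_snoc (fun z => ENNReal.ofReal (aplus (z (Fin.last n) - z (Fin.castSucc j))) *
          ENNReal.ofReal |G (n + 1) z|) (hInt_meas _ _)]
    refine lintegral_congr fun x => lintegral_congr fun y => ?_
    rw [Fin.snoc_last, Fin.snoc_castSucc, ENNReal.ofReal_mul (hap_nonneg _)]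
  have hmeasj : ∀ j : Fin n, Measurable fun x : Fin n → Fin d → ℝ =>
      ∫⁻ y : Fin d → ℝ, ENNReal.ofReal (aplus (y - x j) * |G (n + 1) (Fin.snoc x y)|) := by
    intro j
    apply Measurable.lintegral_prod_right
      (f := fun x y => ENNReal.ofReal (aplus (y - x j) * |G (n + 1) (Fin.snoc x y)|))
    exact ((hap_meas.comp (measurable_snd.sub ((measurable_pi_apply j).comp measurable_fst))).mul
      (((hGmeas (n + 1)).comp measurable_snoc').abs)).ennreal_ofReal
  -- Step A : bound the L3 integral
  have hA : (∫⁻ x : Fin n → Fin d → ℝ, ENNReal.ofReal |L3 d κp aplus G n x|)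
      ≤ ENNReal.ofReal κp * ((n : ℝ≥0∞) * I₀) := by
    have hpt : ∀ x : Fin n → Fin d → ℝ, ENNReal.ofReal |L3 d κp aplus G n x| ≤
        ENNReal.ofReal κp * ∑ j : Fin n,
          ∫⁻ y : Fin d → ℝ, ENNReal.ofReal (aplus (y - x j) * |G (n + 1) (Fin.snoc x y)|) := by
      intro x
      rw [show L3 d κp aplus G n x
          = κp * ∑ j : Fin n, ∫ y, aplus (y - x j) * G (n + 1) (Fin.snoc x y) from rfl,
        abs_mul, abs_of_nonneg hκp, ENNReal.ofReal_mul hκp]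
      refine mul_le_mul_right ?_ _
      calc ENNReal.ofReal |∑ j : Fin n, ∫ y, aplus (y - x j) * G (n + 1) (Fin.snoc x y)|
          ≤ ENNReal.ofReal (∑ j : Fin n, |∫ y, aplus (y - x j) * G (n + 1) (Fin.snoc x y)|) :=
            ENNReal.ofReal_le_ofReal (Finset.abs_sum_le_sum_abs _ _)
        _ = ∑ j : Fin n, ENNReal.ofReal |∫ y, aplus (y - x j) * G (n + 1) (Fin.snoc x y)| :=
            ENNReal.ofReal_sum_of_nonneg (fun j _ => abs_nonneg _)
        _ ≤ ∑ j : Fin n, ∫⁻ y, ENNReal.ofReal (aplus (y - x j) * |G (n + 1) (Fin.snoc x y)|) := by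
            refine Finset.sum_le_sum fun j _ => ?_
            calc ENNReal.ofReal |∫ y, aplus (y - x j) * G (n + 1) (Fin.snoc x y)|
                = ↑‖∫ y, aplus (y - x j) * G (n + 1) (Fin.snoc x y)‖₊ := by
                  rw [← enorm_eq_nnnorm, ← ofReal_norm, Real.norm_eq_abs]
              _ ≤ ∫⁻ y, ↑‖aplus (y - x j) * G (n + 1) (Fin.snoc x y)‖₊ :=
                  enorm_integral_le_lintegral_enorm _
              _ = ∫⁻ y, ENNReal.ofReal (aplus (y - x j) * |G (n + 1) (Fin.snoc x y)|) := by
                  refine lintegral_congr fun y => ?_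
                  rw [← enorm_eq_nnnorm, ← ofReal_norm, Real.norm_eq_abs, abs_mul,
                    abs_of_nonneg (hap_nonneg _)]
    calc (∫⁻ x : Fin n → Fin d → ℝ, ENNReal.ofReal |L3 d κp aplus G n x|)
        ≤ ∫⁻ x : Fin n → Fin d → ℝ, ENNReal.ofReal κp * ∑ j : Fin n,
            ∫⁻ y, ENNReal.ofReal (aplus (y - x j) * |G (n + 1) (Fin.snoc x y)|) :=
          lintegral_mono hpt
      _ = ENNReal.ofReal κp * ∫⁻ x : Fin n → Fin d → ℝ, ∑ j : Fin n,
            ∫⁻ y, ENNReal.ofReal (aplus (y - x j) * |G (n + 1) (Fin.snoc x y)|) :=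
          lintegral_const_mul' _ _ ENNReal.ofReal_ne_top
      _ = ENNReal.ofReal κp * ∑ j : Fin n, ∫⁻ x : Fin n → Fin d → ℝ,
            ∫⁻ y, ENNReal.ofReal (aplus (y - x j) * |G (n + 1) (Fin.snoc x y)|) := by
          rw [lintegral_finset_sum _ (fun j _ => hmeasj j)]
      _ = ENNReal.ofReal κp * ((n : ℝ≥0∞) * I₀) := by
          congr 1
          rw [Finset.sum_congr rfl fun j _ => (hfub j).trans (hIconst j)]
          simp [Finset.sum_const, mul_comm]
  -- Step B : the energy integral
  have hB : (∫⁻ z : Fin (n + 1) → Fin d → ℝ,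
      ENNReal.ofReal (κp * pairEnergy d aplus (n + 1) z) * ENNReal.ofReal |G (n + 1) z|)
      = ((n : ℝ≥0∞) + 1) * (ENNReal.ofReal κp * ((n : ℝ≥0∞) * I₀)) := by
    have hpt : ∀ z : Fin (n + 1) → Fin d → ℝ,
        ENNReal.ofReal (κp * pairEnergy d aplus (n + 1) z) * ENNReal.ofReal |G (n + 1) z| =
        ENNReal.ofReal κp * ∑ i : Fin (n + 1), ∑ j : Fin (n + 1),
          (if i ≠ j then ENNReal.ofReal (aplus (z i - z j)) * ENNReal.ofReal |G (n + 1) z|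
           else 0) := by
      intro z
      rw [ENNReal.ofReal_mul hκp, mul_assoc]
      congr 1
      rw [show pairEnergy d aplus (n + 1) z
          = ∑ i : Fin (n + 1), ∑ j : Fin (n + 1), if i ≠ j then aplus (z i - z j) else 0 from rfl]
      rw [ENNReal.ofReal_sum_of_nonneg (fun i _ => Finset.sum_nonneg fun j _ => by
        split; exacts [hap_nonneg _, le_rfl]), Finset.sum_mul]
      refine Finset.sum_congr rfl fun i _ => ?_
      rw [ENNReal.ofReal_sum_of_nonneg (fun j _ => by
        split; exacts [hap_nonneg _, le_rfl]), Finset.sum_mul]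
      refine Finset.sum_congr rfl fun j _ => ?_
      split <;> simp
    simp_rw [hpt]
    rw [lintegral_const_mul' _ _ ENNReal.ofReal_ne_top]
    rw [lintegral_finset_sum _ (fun i _ => Finset.measurable_sum _ (fun j _ => by
      rcases eq_or_ne i j with h | h
      · simp [h]
      · simpa [h] using hInt_meas i j))]
    have hinner : ∀ i : Fin (n + 1),
        (∫⁻ z : Fin (n + 1) → Fin d → ℝ, ∑ j : Fin (n + 1),
          (if i ≠ j then ENNReal.ofReal (aplus (z i - z j)) * ENNReal.ofReal |G (n + 1) z|
           else 0)) = (n : ℝ≥0∞) * I₀ := by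
      intro i
      rw [lintegral_finset_sum _ (fun j _ => by
        rcases eq_or_ne i j with h | h
        · simp [h]
        · simpa [h] using hInt_meas i j)]
      have : ∀ j : Fin (n + 1),
          (∫⁻ z : Fin (n + 1) → Fin d → ℝ,
            if i ≠ j then ENNReal.ofReal (aplus (z i - z j)) * ENNReal.ofReal |G (n + 1) z|
            else 0) = if i ≠ j then I₀ else 0 := by
        intro j
        rcases eq_or_ne i j with h | h
        · simp [h]
        · simp only [h, if_pos, ne_eq, not_false_eq_true]
          exact hIeq i j _ _ h (hlastne j₀)
      rw [Finset.sum_congr rfl fun j _ => this j]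
      rw [← Finset.sum_filter, Finset.filter_ne, Finset.sum_const,
        Finset.card_erase_of_mem (Finset.mem_univ i), Finset.card_univ, Fintype.card_fin,
        Nat.add_sub_cancel, nsmul_eq_mul]
    rw [Finset.sum_congr rfl fun i _ => hinner i, Finset.sum_const, Finset.card_univ,
      Fintype.card_fin, nsmul_eq_mul]
    push_cast
    ring
  -- Step K : domination by the L0 integral
  have hK : (∫⁻ z : Fin (n + 1) → Fin d → ℝ,
      ENNReal.ofReal (κp * pairEnergy d aplus (n + 1) z) * ENNReal.ofReal |G (n + 1) z|)
      ≤ ENNReal.ofReal (δ * C) *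
        ∫⁻ z : Fin (n + 1) → Fin d → ℝ, ENNReal.ofReal |L0 d m κm aminus G (n + 1) z| := by
    rw [← lintegral_const_mul' _ _ ENNReal.ofReal_ne_top]
    refine lintegral_mono fun z => ?_
    have hL0 : |L0 d m κm aminus G (n + 1) z|
        = (m * ((n + 1 : ℕ) : ℝ) + κm * pairEnergy d aminus (n + 1) z) * |G (n + 1) z| := by
      rw [show L0 d m κm aminus G (n + 1) z
          = -(m * ((n + 1 : ℕ) : ℝ) + κm * pairEnergy d aminus (n + 1) z) * G (n + 1) z from rfl,
        abs_mul, abs_neg, abs_of_nonneg (hmE (n + 1) z)]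
    rw [hL0]
    calc ENNReal.ofReal (κp * pairEnergy d aplus (n + 1) z) * ENNReal.ofReal |G (n + 1) z|
        = ENNReal.ofReal (κp * pairEnergy d aplus (n + 1) z * |G (n + 1) z|) :=
          (ENNReal.ofReal_mul (mul_nonneg hκp (pairEnergy_nonneg hap_nonneg _ _))).symm
      _ ≤ ENNReal.ofReal (δ * C *
            ((m * ((n + 1 : ℕ) : ℝ) + κm * pairEnergy d aminus (n + 1) z) * |G (n + 1) z|)) := by
          refine ENNReal.ofReal_le_ofReal ?_
          rw [← mul_assoc]
          exact mul_le_mul_of_nonneg_right (hdom (n + 1) (by omega) z) (abs_nonneg _)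
      _ = ENNReal.ofReal (δ * C) * ENNReal.ofReal
            ((m * ((n + 1 : ℕ) : ℝ) + κm * pairEnergy d aminus (n + 1) z) * |G (n + 1) z|) :=
          ENNReal.ofReal_mul hδC
  -- assembly
  have hne0 : ((n : ℝ≥0∞) + 1) ≠ 0 := by
    simp
  have hnetop : ((n : ℝ≥0∞) + 1) ≠ ⊤ := by
    simp [ENNReal.add_eq_top]
  have hcoef : ENNReal.ofReal (C ^ n / n.factorial) * ((n : ℝ≥0∞) + 1)⁻¹ *
      ENNReal.ofReal (δ * C)
      = ENNReal.ofReal δ * ENNReal.ofReal (C ^ (n + 1) / (n + 1).factorial) := by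
    have h1 : ((n : ℝ≥0∞) + 1)⁻¹ = ENNReal.ofReal ((n : ℝ) + 1)⁻¹ := by
      rw [show ((n : ℝ≥0∞) + 1) = ENNReal.ofReal ((n : ℝ) + 1) by
        rw [ENNReal.ofReal_add (Nat.cast_nonneg n) zero_le_one, ENNReal.ofReal_natCast,
          ENNReal.ofReal_one], ← ENNReal.ofReal_inv_of_pos (by positivity)]
    rw [h1, ← ENNReal.ofReal_mul (by positivity), ← ENNReal.ofReal_mul (by positivity),
      ← ENNReal.ofReal_mul hδ]
    congr 1
    rw [Nat.factorial_succ]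
    have hfac : ((n.factorial : ℝ)) ≠ 0 := by positivity
    push_cast
    field_simp
    ring
  set K : ℝ≥0∞ :=
    ∫⁻ z : Fin (n + 1) → Fin d → ℝ, ENNReal.ofReal |L0 d m κm aminus G (n + 1) z| with hKdef
  calc ENNReal.ofReal (C ^ n / n.factorial) *
        ∫⁻ x : Fin n → Fin d → ℝ, ENNReal.ofReal |L3 d κp aplus G n x|
      ≤ ENNReal.ofReal (C ^ n / n.factorial) * (ENNReal.ofReal κp * ((n : ℝ≥0∞) * I₀)) :=
        mul_le_mul_right hA _
    _ = ENNReal.ofReal (C ^ n / n.factorial) * (((n : ℝ≥0∞) + 1)⁻¹ *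
          (((n : ℝ≥0∞) + 1) * (ENNReal.ofReal κp * ((n : ℝ≥0∞) * I₀)))) := by
        rw [← mul_assoc (((n : ℝ≥0∞) + 1)⁻¹), ENNReal.inv_mul_cancel hne0 hnetop, one_mul]
    _ = ENNReal.ofReal (C ^ n / n.factorial) * (((n : ℝ≥0∞) + 1)⁻¹ *
          ∫⁻ z : Fin (n + 1) → Fin d → ℝ,
            ENNReal.ofReal (κp * pairEnergy d aplus (n + 1) z) * ENNReal.ofReal |G (n + 1) z|) := by
        rw [hB]
    _ ≤ ENNReal.ofReal (C ^ n / n.factorial) * (((n : ℝ≥0∞) + 1)⁻¹ *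
          (ENNReal.ofReal (δ * C) * K)) := by
        exact mul_le_mul_right (mul_le_mul_right hK _) _
    _ = ENNReal.ofReal (C ^ n / n.factorial) * ((n : ℝ≥0∞) + 1)⁻¹ *
          ENNReal.ofReal (δ * C) * K := by ring
    _ = ENNReal.ofReal δ * (ENNReal.ofReal (C ^ (n + 1) / (n + 1).factorial) * K) := by
        rw [hcoef]; ring

/-- Lemma 4.5: if `κ⁺Eₙ^{a⁺}(x) ≤ δC(mn + κ⁻Eₙ^{a⁻}(x))` for all `n ≥ 1` and `x`, then
`‖L₃G‖_C ≤ δ‖L₀G‖_C` for symmetric `G` with `‖L₀G‖_C < ∞`. -/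
theorem stmt6 (d : ℕ) (hd : 1 ≤ d)
    (aminus aplus : (Fin d → ℝ) → ℝ)
    (ham_nonneg : ∀ x, 0 ≤ aminus x) (ham_even : ∀ x, aminus (-x) = aminus x)
    (ham_meas : Measurable aminus) (ham_int : Integrable aminus)
    (ham_norm : ∫ x, aminus x = 1)
    (hap_nonneg : ∀ x, 0 ≤ aplus x) (hap_even : ∀ x, aplus (-x) = aplus x)
    (hap_meas : Measurable aplus) (hap_int : Integrable aplus)
    (hap_norm : ∫ x, aplus x = 1)
    (m κm κp C : ℝ) (hm : 0 < m) (hκm : 0 < κm) (hκp : 0 < κp) (hC : 0 < C)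
    (δ : ℝ) (hδ : 0 < δ)
    (hdom : ∀ (n : ℕ), 1 ≤ n → ∀ x : Fin n → (Fin d → ℝ),
      κp * pairEnergy d aplus n x ≤ δ * C * (m * n + κm * pairEnergy d aminus n x))
    (G : (n : ℕ) → (Fin n → (Fin d → ℝ)) → ℝ) (hGmeas : ∀ n, Measurable (G n))
    (hGsymm : IsSymmSeq d G)
    (hG : normLC d C (L0 d m κm aminus G) < ⊤) :
    normLC d C (L3 d κp aplus G)
      ≤ ENNReal.ofReal δ * normLC d C (L0 d m κm aminus G) := by
  have hmE : ∀ (k : ℕ) (x : Fin k → Fin d → ℝ), 0 ≤ m * k + κm * pairEnergy d aminus k x :=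
    fun k x => add_nonneg (mul_nonneg hm.le (Nat.cast_nonneg _))
      (mul_nonneg hκm.le (pairEnergy_nonneg ham_nonneg _ _))
  have key := key_step aminus aplus hap_nonneg hap_meas m κm κp C δ hκp.le hδ.le hC.le
    (mul_nonneg hδ.le hC.le) hdom hmE G hGmeas hGsymm
  rw [normLC, normLC]
  calc (∑' n : ℕ, ENNReal.ofReal (C ^ n / n.factorial) *
        ∫⁻ x : Fin n → (Fin d → ℝ), ENNReal.ofReal |L3 d κp aplus G n x|)
      ≤ ∑' n : ℕ, ENNReal.ofReal δ *
          (ENNReal.ofReal (C ^ (n + 1) / (n + 1).factorial) *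
            ∫⁻ z : Fin (n + 1) → Fin d → ℝ, ENNReal.ofReal |L0 d m κm aminus G (n + 1) z|) :=
        ENNReal.tsum_le_tsum key
    _ = ENNReal.ofReal δ * ∑' n : ℕ,
          (ENNReal.ofReal (C ^ (n + 1) / (n + 1).factorial) *
            ∫⁻ z : Fin (n + 1) → Fin d → ℝ, ENNReal.ofReal |L0 d m κm aminus G (n + 1) z|) :=
        ENNReal.tsum_mul_left
    _ ≤ ENNReal.ofReal δ * ∑' n : ℕ,
          (ENNReal.ofReal (C ^ n / n.factorial) *
            ∫⁻ z : Fin n → Fin d → ℝ, ENNReal.ofReal |L0 d m κm aminus G n z|) := by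
        refine mul_le_mul_right ?_ _
        exact Summable.tsum_le_tsum_of_inj Nat.succ Nat.succ_injective (fun c _ => zero_le)
          (fun n => le_rfl) ENNReal.summable ENNReal.summable
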